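/- In the evidence-based semantics, the fully-static fragment never fails: if a closed term t is well-typed using only fully static (?-free) types, so that every evidence appearing in t is fully static, then reduction of t never produces error (every meet of evidences encountered during reduction is defined). -/

import Mathlib

inductive GType : Type
  | int
  | bool
  | unk
  | arrow (a b : GType)
deriving DecidableEq

/-- Consistency on gradual types. -/
inductive Consist : GType → GType → Prop
  | unkL (G : GType) : Consist GType.unk G
  | unkR (G : GType) : Consist G GType.unk
  | int : Consist GType.int GType.int
  | bool : Consist GType.bool GType.bool
  | arrow {a a' b b' : GType} : Consist a a' → Consist b b' →
      Consist (GType.arrow a b) (GType.arrow a' b')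

/-- Syntactic precision on gradual types. -/
inductive SPrec : GType → GType → Prop
  | unk (G : GType) : SPrec G GType.unk
  | int : SPrec GType.int GType.int
  | bool : SPrec GType.bool GType.bool
  | arrow {a a' b b' : GType} : SPrec a a' → SPrec b b' →
      SPrec (GType.arrow a b) (GType.arrow a' b')

/-- Partial precision meet on gradual types. -/
def gmeet : GType → GType → Option GType
  | g, GType.unk => some g
  | GType.unk, g => some g
  | GType.int, GType.int => some GType.int
  | GType.bool, GType.bool => some GType.bool
  | GType.arrow a b, GType.arrow a' b' =>
      match gmeet a a', gmeet b b' with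
      | some x, some y => some (GType.arrow x y)
      | _, _ => none
  | _, _ => none

mutual
/-- Terms of the evidence-decorated gradual calculus.
`val ε u G` is an evidence value `ε u` ascribed at type `G`;
`asc ε t G` is an evidence ascription of an arbitrary term. -/
inductive Tm : Type
  | var (x : String)
  | val (ε : GType) (u : Raw) (G : GType)
  | app (t1 t2 : Tm)
  | asc (ε : GType) (t : Tm) (G : GType)

/-- Raw values: booleans, integers, lambda abstractions. -/
inductive Raw : Type
  | rbool (b : Bool)
  | rint (n : Int)
  | rlam (x : String) (G : GType) (t : Tm)
end

mutual
def substTm (x : String) (v : Tm) : Tm → Tm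
  | Tm.var y => if y = x then v else Tm.var y
  | Tm.val ε u G => Tm.val ε (substRaw x v u) G
  | Tm.app t1 t2 => Tm.app (substTm x v t1) (substTm x v t2)
  | Tm.asc ε t G => Tm.asc ε (substTm x v t) G

def substRaw (x : String) (v : Tm) : Raw → Raw
  | Raw.rbool b => Raw.rbool b
  | Raw.rint n => Raw.rint n
  | Raw.rlam y G t => if y = x then Raw.rlam y G t else Raw.rlam y G (substTm x v t)
end

/-- Context update. -/
def upd (Γ : String → Option GType) (x : String) (G : GType) : String → Option GType :=
  fun y => if y = x then some G else Γ y

/-- The empty typing context. -/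
def emptyCtx : String → Option GType := fun _ => none

mutual
/-- Typing of terms: standard simply-typed rules with exact type equality at
application; consistency, justified by evidence `ε` (with `ε ⊑` both types),
appears only at (value) ascriptions. -/
inductive HasTy : (String → Option GType) → Tm → GType → Prop
  | var {Γ x G} : Γ x = some G → HasTy Γ (Tm.var x) G
  | val {Γ ε u G1 G2} : RawTy Γ u G1 → SPrec ε G1 → SPrec ε G2 →
      HasTy Γ (Tm.val ε u G2) G2
  | app {Γ t1 t2 G1 G2} : HasTy Γ t1 (GType.arrow G1 G2) → HasTy Γ t2 G1 →
      HasTy Γ (Tm.app t1 t2) G2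
  | asc {Γ ε t G1 G2} : HasTy Γ t G1 → SPrec ε G1 → SPrec ε G2 →
      HasTy Γ (Tm.asc ε t G2) G2

/-- Typing of raw values. -/
inductive RawTy : (String → Option GType) → Raw → GType → Prop
  | rbool {Γ b} : RawTy Γ (Raw.rbool b) GType.bool
  | rint {Γ n} : RawTy Γ (Raw.rint n) GType.int
  | rlam {Γ x G1 t G2} : HasTy (upd Γ x G1) t G2 →
      RawTy Γ (Raw.rlam x G1 t) (GType.arrow G1 G2)
end

/-- Domain of a function-type evidence. -/
def gdom : GType → Option GType
  | GType.arrow a _ => some a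
  | _ => none

/-- Codomain of a function-type evidence. -/
def gcod : GType → Option GType
  | GType.arrow _ b => some b
  | _ => none

/-- Result of a reduction step: a term or a runtime error. -/
inductive Res : Type
  | term (t : Tm)
  | error

/-- Small-step reduction. Errors arise exactly from undefined meets. -/
inductive Step : Tm → Res → Prop
  | ascv {ε1 ε2 ε : GType} {u G1 G2} : gmeet ε1 ε2 = some ε →
      Step (Tm.asc ε2 (Tm.val ε1 u G1) G2) (Res.term (Tm.val ε u G2))
  | ascvErr {ε1 ε2 : GType} {u G1 G2} : gmeet ε1 ε2 = none →
      Step (Tm.asc ε2 (Tm.val ε1 u G1) G2) Res.error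
  | beta {ε1 ε2 εd εc ε : GType} {x Gx t GA GB u Gu} :
      gdom ε1 = some εd → gcod ε1 = some εc → gmeet ε2 εd = some ε →
      Step (Tm.app (Tm.val ε1 (Raw.rlam x Gx t) (GType.arrow GA GB)) (Tm.val ε2 u Gu))
           (Res.term (Tm.asc εc (substTm x (Tm.val ε u Gx) t) GB))
  | betaErr {ε1 ε2 εd : GType} {x Gx t GA GB u Gu} :
      gdom ε1 = some εd → gmeet ε2 εd = none →
      Step (Tm.app (Tm.val ε1 (Raw.rlam x Gx t) (GType.arrow GA GB)) (Tm.val ε2 u Gu))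
           Res.error
  | appL {t1 t1' t2} : Step t1 (Res.term t1') →
      Step (Tm.app t1 t2) (Res.term (Tm.app t1' t2))
  | appLErr {t1 t2} : Step t1 Res.error → Step (Tm.app t1 t2) Res.error
  | appR {ε u G t2 t2'} : Step t2 (Res.term t2') →
      Step (Tm.app (Tm.val ε u G) t2) (Res.term (Tm.app (Tm.val ε u G) t2'))
  | appRErr {ε u G t2} : Step t2 Res.error →
      Step (Tm.app (Tm.val ε u G) t2) Res.error
  | ascCong {ε t t' G} : Step t (Res.term t') →
      Step (Tm.asc ε t G) (Res.term (Tm.asc ε t' G))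
  | ascCongErr {ε t G} : Step t Res.error → Step (Tm.asc ε t G) Res.error

/-- Fully static gradual types: no occurrence of `?`. -/
inductive FullyStatic : GType → Prop
  | int : FullyStatic GType.int
  | bool : FullyStatic GType.bool
  | arrow {a b : GType} : FullyStatic a → FullyStatic b →
      FullyStatic (GType.arrow a b)

mutual
/-- Terms all of whose type annotations and evidences are fully static. -/
inductive StaticTm : Tm → Prop
  | var (x : String) : StaticTm (Tm.var x)
  | val {ε u G} : FullyStatic ε → StaticRaw u → FullyStatic G →
      StaticTm (Tm.val ε u G)
  | app {t1 t2} : StaticTm t1 → StaticTm t2 → StaticTm (Tm.app t1 t2)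
  | asc {ε t G} : FullyStatic ε → StaticTm t → FullyStatic G →
      StaticTm (Tm.asc ε t G)

inductive StaticRaw : Raw → Prop
  | rbool (b : Bool) : StaticRaw (Raw.rbool b)
  | rint (n : Int) : StaticRaw (Raw.rint n)
  | rlam {x G t} : FullyStatic G → StaticTm t → StaticRaw (Raw.rlam x G t)
end

/-- Reflexive-transitive closure of term reduction. -/
inductive Steps : Tm → Tm → Prop
  | refl (t : Tm) : Steps t t
  | tail {t1 t2 t3} : Steps t1 t2 → Step t2 (Res.term t3) → Steps t1 t3

theorem sprec_refl : ∀ G, SPrec G G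
  | GType.int => SPrec.int
  | GType.bool => SPrec.bool
  | GType.unk => SPrec.unk _
  | GType.arrow a b => SPrec.arrow (sprec_refl a) (sprec_refl b)

theorem sprec_static_eq : ∀ {a b : GType}, SPrec a b → FullyStatic b → a = b := by
  intro a b h hs
  induction h with
  | unk => cases hs
  | int => rfl
  | bool => rfl
  | arrow h1 h2 ih1 ih2 => cases hs with
    | arrow s1 s2 => rw [ih1 s1, ih2 s2]

theorem gmeet_self : ∀ a, gmeet a a = some a
  | GType.int => rfl
  | GType.bool => rfl
  | GType.unk => rfl
  | GType.arrow a b => by simp [gmeet, gmeet_self a, gmeet_self b]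

mutual
theorem weakenTm : ∀ {Γ t G}, HasTy Γ t G →
    ∀ {Γ' : String → Option GType}, (∀ y H, Γ y = some H → Γ' y = some H) → HasTy Γ' t G
  | _, _, _, HasTy.var h, _, sub => HasTy.var (sub _ _ h)
  | _, _, _, HasTy.val hr p1 p2, _, sub => HasTy.val (weakenRaw hr sub) p1 p2
  | _, _, _, HasTy.app h1 h2, _, sub => HasTy.app (weakenTm h1 sub) (weakenTm h2 sub)
  | _, _, _, HasTy.asc h p1 p2, _, sub => HasTy.asc (weakenTm h sub) p1 p2

theorem weakenRaw : ∀ {Γ u G}, RawTy Γ u G →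
    ∀ {Γ' : String → Option GType}, (∀ y H, Γ y = some H → Γ' y = some H) → RawTy Γ' u G
  | _, _, _, RawTy.rbool, _, _ => RawTy.rbool
  | _, _, _, RawTy.rint, _, _ => RawTy.rint
  | _, _, _, RawTy.rlam h, _, sub => RawTy.rlam (weakenTm h (by
      intro y H hy
      unfold upd at *
      split at hy <;> simp_all))
end
theorem ctx_ext {Γ1 Γ2 : String → Option GType} (h : ∀ y, Γ1 y = Γ2 y)
    {t G} (ht : HasTy Γ1 t G) : HasTy Γ2 t G := by
  rwa [show Γ1 = Γ2 from funext h] at ht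

mutual
theorem substTy : ∀ {Δ t G}, HasTy Δ t G →
    ∀ {x v Gx} (_ : HasTy emptyCtx v Gx) (Γ : String → Option GType),
      Δ = upd Γ x Gx → HasTy Γ (substTm x v t) G
  | _, _, _, HasTy.var (x := z) h, x, v, Gx, hv, Γ, hΔ => by
      subst hΔ
      by_cases hz : z = x
      · subst hz
        unfold upd at h; simp at h
        subst h
        simpa [substTm, if_pos rfl] using weakenTm hv (by intro y H hy; cases hy.symm.trans rfl)
      · unfold upd at h; rw [if_neg hz] at h
        simpa [substTm, hz] using HasTy.var h
  | _, _, _, HasTy.val hr p1 p2, x, v, Gx, hv, Γ, hΔ => by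
      exact HasTy.val (substRawTy hr hv Γ hΔ) p1 p2
  | _, _, _, HasTy.app h1 h2, x, v, Gx, hv, Γ, hΔ =>
      HasTy.app (substTy h1 hv Γ hΔ) (substTy h2 hv Γ hΔ)
  | _, _, _, HasTy.asc h p1 p2, x, v, Gx, hv, Γ, hΔ =>
      HasTy.asc (substTy h hv Γ hΔ) p1 p2

theorem substRawTy : ∀ {Δ u G}, RawTy Δ u G →
    ∀ {x v Gx} (_ : HasTy emptyCtx v Gx) (Γ : String → Option GType),
      Δ = upd Γ x Gx → RawTy Γ (substRaw x v u) G
  | _, _, _, RawTy.rbool, _, _, _, _, _, _ => RawTy.rbool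
  | _, _, _, RawTy.rint, _, _, _, _, _, _ => RawTy.rint
  | _, _, _, RawTy.rlam (x := y) (G1 := G1) h, x, v, Gx, hv, Γ, hΔ => by
      subst hΔ
      by_cases hy : y = x
      · subst hy
        simp only [substRaw, if_pos rfl]
        exact RawTy.rlam (ctx_ext (by intro z; unfold upd; by_cases hz : z = y <;> simp [hz]) h)
      · simp only [substRaw, if_neg hy]
        refine RawTy.rlam (substTy (ctx_ext (fun z => ?_) h) hv _ rfl)
        unfold upd
        by_cases hz : z = y <;> by_cases hzx : z = x <;> simp_all
end
mutual
theorem substStatic : ∀ {t}, StaticTm t → ∀ {x v}, StaticTm v → StaticTm (substTm x v t)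
  | _, StaticTm.var y, x, v, hv => by
      unfold substTm; split
      · exact hv
      · exact StaticTm.var y
  | _, StaticTm.val hε hu hG, x, v, hv => StaticTm.val hε (substStaticRaw hu hv) hG
  | _, StaticTm.app h1 h2, x, v, hv => StaticTm.app (substStatic h1 hv) (substStatic h2 hv)
  | _, StaticTm.asc hε h hG, x, v, hv => StaticTm.asc hε (substStatic h hv) hG

theorem substStaticRaw : ∀ {u}, StaticRaw u → ∀ {x v}, StaticTm v → StaticRaw (substRaw x v u)
  | _, StaticRaw.rbool b, _, _, _ => StaticRaw.rbool b
  | _, StaticRaw.rint n, _, _, _ => StaticRaw.rint n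
  | _, StaticRaw.rlam hG ht, x, v, hv => by
      unfold substRaw; split
      · exact StaticRaw.rlam hG ht
      · exact StaticRaw.rlam hG (substStatic ht hv)
end

/-- A static well-typed term never steps to error. -/
theorem no_error : ∀ {t}, Step t Res.error → ∀ {Γ G}, HasTy Γ t G → StaticTm t → False
  | _, Step.ascvErr hm, Γ, G, hty, hst => by
      cases hty with
      | asc h p1 p2 =>
        cases h with
        | val hr q1 q2 =>
          cases hst with
          | asc hε2 hin hG2 =>
            cases hin with
            | val hε1 hu hG1 =>
              rw [sprec_static_eq q2 hG1, sprec_static_eq p1 hG1, gmeet_self] at hm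
              exact Option.some_ne_none _ hm
  | _, Step.betaErr (εd := εd) hd hm, Γ, G, hty, hst => by
      cases hty with
      | app h1 h2 =>
        cases h1 with
        | val hr q1 q2 =>
          cases h2 with
          | val hr2 r1 r2 =>
            cases hst with
            | app hs1 hs2 =>
              cases hs1 with
              | val hε1 hu hGAB =>
                cases hs2 with
                | val hε2 hu2 hGu =>
                  cases hGAB with
                  | arrow hGA hGB =>
                    rw [sprec_static_eq q2 (FullyStatic.arrow hGA hGB)] at hd
                    cases hd
                    rw [sprec_static_eq r2 hGA, gmeet_self] at hm
                    exact Option.some_ne_none _ hm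
  | _, Step.appLErr h, Γ, G, hty, hst => by
      cases hty with
      | app h1 h2 =>
        cases hst with
        | app hs1 hs2 => exact no_error h h1 hs1
  | _, Step.appRErr h, Γ, G, hty, hst => by
      cases hty with
      | app h1 h2 =>
        cases hst with
        | app hs1 hs2 => exact no_error h h2 hs2
  | _, Step.ascCongErr h, Γ, G, hty, hst => by
      cases hty with
      | asc h1 p1 p2 =>
        cases hst with
        | asc hε hs hG => exact no_error h h1 hs
theorem preservation : ∀ {t t'}, Step t (Res.term t') →
    ∀ {G}, HasTy emptyCtx t G → StaticTm t → HasTy emptyCtx t' G ∧ StaticTm t'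
  | _, _, Step.ascv hm, G, hty, hst => by
      cases hty with
      | asc h p1 p2 =>
        cases h with
        | val hr q1 q2 =>
          cases hst with
          | asc hε2 hin hG2 =>
            cases hin with
            | val hε1 hu hG1 =>
              have e1 := sprec_static_eq q2 hG1
              have e2 := sprec_static_eq p1 hG1
              subst e1
              subst e2
              rw [gmeet_self] at hm
              cases hm
              exact ⟨HasTy.val hr q1 p2, StaticTm.val hε1 hu hG2⟩
  | _, _, Step.beta hd hc hm, G, hty, hst => by
      cases hty with
      | app h1 h2 =>
        cases h1 with
        | val hr q1 q2 =>
          cases h2 with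
          | val hr2 r1 r2 =>
            cases hst with
            | app hs1 hs2 =>
              cases hs1 with
              | val hε1 hu hGAB =>
                cases hs2 with
                | val hε2 hu2 hGu =>
                  cases hGAB with
                  | arrow hGA hGB =>
                    cases hr with
                    | rlam hb =>
                      have e1 := sprec_static_eq q2 (FullyStatic.arrow hGA hGB)
                      subst e1
                      cases hd; cases hc
                      have e2 := sprec_static_eq r2 hGA
                      rw [e2, gmeet_self] at hm
                      cases hm
                      cases q1 with
                      | arrow qa qb =>
                        cases hu with
                        | rlam hGx ht =>
                          have hv : HasTy emptyCtx (Tm.val _ _ _) _ :=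
                            HasTy.val hr2 (e2 ▸ r1) qa
                          refine ⟨HasTy.asc (substTy hb hv emptyCtx rfl) qb (sprec_refl _),
                            StaticTm.asc hGB
                              (substStatic ht (StaticTm.val (e2 ▸ hε2) hu2 hGx)) hGB⟩
  | _, _, Step.appL h, G, hty, hst => by
      cases hty with
      | app h1 h2 =>
        cases hst with
        | app hs1 hs2 =>
          obtain ⟨a, b⟩ := preservation h h1 hs1
          exact ⟨HasTy.app a h2, StaticTm.app b hs2⟩
  | _, _, Step.appR h, G, hty, hst => by
      cases hty with
      | app h1 h2 =>
        cases hst with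
        | app hs1 hs2 =>
          obtain ⟨a, b⟩ := preservation h h2 hs2
          exact ⟨HasTy.app h1 a, StaticTm.app hs1 b⟩
  | _, _, Step.ascCong h, G, hty, hst => by
      cases hty with
      | asc h1 p1 p2 =>
        cases hst with
        | asc hε hs hG =>
          obtain ⟨a, b⟩ := preservation h h1 hs
          exact ⟨HasTy.asc a p1 p2, StaticTm.asc hε b hG⟩
/-- The fully-static fragment never fails: a closed well-typed term whose
evidences and annotations are all fully static never reduces to error. -/
theorem static_never_fails :
    ∀ (t : Tm) (G : GType), HasTy emptyCtx t G → StaticTm t →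
      ∀ t' : Tm, Steps t t' → ¬ Step t' Res.error := by
  intro t G hty hst t' hsteps
  have key : HasTy emptyCtx t' G ∧ StaticTm t' := by
    induction hsteps with
    | refl => exact ⟨hty, hst⟩
    | tail _ hstep ih => exact preservation hstep ih.1 ih.2
  intro herr
  exact no_error herr key.1 key.2
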